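/- arXiv:2309.11236 — 5 statements merged into one kernel-verified Lean document; each statement's English description precedes it below -/
import Mathlib

section
/- Let V be a finite type with decidable equality, let n : ℕ, let D D' : Fin n → Finset V be the per-argument ranges of two factors f g : (Fin n → V) → ℝ≥0, and suppose f and g represent equivalent potentials, i.e., there exists a permutation π : Equiv.Perm (Fin n) such that D' i = D (π i) for all i and f r = g (r ∘ π) for every assignment r : Fin n → V with r i ∈ D i for all i. Then (1) there exists a bijection τ : Equiv.Perm (Fin n) such that D i = D' (τ i) for all i, and (2) for every multiset h : Multiset V, the multiset of potentials of f over in-range assignments with histogram h equals the corresponding multiset for g: Multiset.map f ((Finset.univ.filter (fun r => (∀ i, r i ∈ D i) ∧ hist r = h)).val) = Multiset.map g ((Finset.univ.filter (fun r => (∀ i, r i ∈ D' i) ∧ hist r = h)).val). -/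
open scoped NNReal

/-- The histogram of an assignment `r : Fin n → V` is the multiset of its values. -/
def hist {n : ℕ} {V : Type*} (r : Fin n → V) : Multiset V :=
  Multiset.map r Finset.univ.val

lemma hist_comp_perm {n : ℕ} {V : Type*} (r : Fin n → V) (π : Equiv.Perm (Fin n)) :
    hist (r ∘ π) = hist r := by
  unfold hist
  rw [← Multiset.map_map]
  congr 1
  have : Multiset.map (⇑π) Finset.univ.val = (Finset.univ.map π.toEmbedding).val := rfl
  rw [this, Finset.map_univ_equiv]

/-- **Necessary Conditions for Identical Potentials** (Theorem 1).
If two factors `f` and `g` represent equivalent potentials (via a permutation `π` of the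
argument positions), then (1) there is a bijection `τ` matching the per-argument ranges, and
(2) for every histogram `h`, the multiset of potentials of `f` on in-range assignments with
histogram `h` equals the corresponding multiset for `g`. -/
theorem stmt_0 {V : Type*} [Fintype V] [DecidableEq V] (n : ℕ)
    (D D' : Fin n → Finset V) (f g : (Fin n → V) → ℝ≥0)
    (hequiv : ∃ π : Equiv.Perm (Fin n), (∀ i, D' i = D (π i)) ∧
      ∀ r : Fin n → V, (∀ i, r i ∈ D i) → f r = g (r ∘ π)) :
    (∃ τ : Equiv.Perm (Fin n), ∀ i, D i = D' (τ i)) ∧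
    ∀ h : Multiset V,
      Multiset.map f
        ((Finset.univ.filter (fun r : Fin n → V => (∀ i, r i ∈ D i) ∧ hist r = h)).val) =
      Multiset.map g
        ((Finset.univ.filter (fun r : Fin n → V => (∀ i, r i ∈ D' i) ∧ hist r = h)).val) := by
  obtain ⟨π, hD, hf⟩ := hequiv
  constructor
  · exact ⟨π.symm, fun i => by rw [hD, Equiv.apply_symm_apply]⟩
  · intro h
    -- the equiv r ↦ r ∘ π on assignments
    let e : (Fin n → V) ≃ (Fin n → V) :=
      ⟨fun r => r ∘ π, fun r => r ∘ π.symm,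
       fun r => by ext i; simp, fun r => by ext i; simp⟩
    have hset : (Finset.univ.filter (fun r : Fin n → V => (∀ i, r i ∈ D i) ∧ hist r = h)).map
        e.toEmbedding =
        Finset.univ.filter (fun r : Fin n → V => (∀ i, r i ∈ D' i) ∧ hist r = h) := by
      ext s
      simp only [Finset.mem_map, Finset.mem_filter, Finset.mem_univ, true_and]
      constructor
      · rintro ⟨r, ⟨hr, hh⟩, rfl⟩
        refine ⟨fun i => ?_, ?_⟩
        · rw [hD]; exact hr (π i)
        · rw [show (e.toEmbedding r : Fin n → V) = r ∘ π from rfl, hist_comp_perm, hh]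
      · rintro ⟨hs, hh⟩
        refine ⟨s ∘ π.symm, ⟨fun i => ?_, ?_⟩, ?_⟩
        · have := hs (π.symm i)
          rwa [hD, Equiv.apply_symm_apply] at this
        · rw [hist_comp_perm (π := π.symm), hh]
        · show (s ∘ π.symm) ∘ π = s
          ext i; simp
    rw [← hset, Finset.map_val, Multiset.map_map]
    apply Multiset.map_congr rfl
    intro r hr
    rw [Finset.mem_val, Finset.mem_filter] at hr
    exact hf r hr.2.1
end

section
/- Let V be a type, n : ℕ, and f : (Fin n → V) → ℝ≥0 a factor. Then f is commutative, i.e., f (r ∘ π) = f r for every permutation π : Equiv.Perm (Fin n) and every assignment r, if and only if there exists a function f' : Multiset V → ℝ≥0 such that f r = f' (hist r) for every assignment r. -/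
open scoped NNReal

theorem hist_exists_perm {n : ℕ} {V : Type*} {r s : Fin n → V} (h : hist r = hist s) :
    ∃ σ : Equiv.Perm (Fin n), r ∘ σ = s := by
  classical
  have hcard : ∀ v : V, Fintype.card {i // s i = v} = Fintype.card {i // r i = v} := by
    intro v
    have := congrArg (Multiset.count v) h
    simp only [hist, Multiset.count_map] at this
    simpa [Fintype.card_subtype, Finset.card, Finset.filter, eq_comm] using this.symm
  have e : ∀ v : V, {i // s i = v} ≃ {i // r i = v} := fun v =>
    Fintype.equivOfCardEq (hcard v)
  refine ⟨(Equiv.sigmaFiberEquiv s).symm.trans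
    ((Equiv.sigmaCongrRight e).trans (Equiv.sigmaFiberEquiv r)), ?_⟩
  funext i
  simp only [Function.comp_apply, Equiv.trans_apply, Equiv.sigmaFiberEquiv,
    Equiv.sigmaCongrRight, Equiv.coe_fn_mk, Equiv.coe_fn_symm_mk]
  exact (e (s i) ⟨i, rfl⟩).2

/-- A factor `f` is commutative if and only if it factors through the histogram of its
arguments, i.e., it can be equivalently encoded by a factor taking a counting random variable
(a histogram) as its single argument. -/
theorem stmt_5 {V : Type*} (n : ℕ) (f : (Fin n → V) → ℝ≥0) :
    (∀ (π : Equiv.Perm (Fin n)) (r : Fin n → V), f (r ∘ π) = f r) ↔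
      ∃ f' : Multiset V → ℝ≥0, ∀ r : Fin n → V, f r = f' (hist r) := by
  classical
  constructor
  · intro hcomm
    refine ⟨fun m => if h : ∃ r : Fin n → V, hist r = m then f h.choose else 0, fun r => ?_⟩
    have h : ∃ r' : Fin n → V, hist r' = hist r := ⟨r, rfl⟩
    simp only [dif_pos h]
    obtain ⟨σ, hσ⟩ := hist_exists_perm h.choose_spec
    rw [← hcomm σ h.choose, hσ]
  · rintro ⟨f', hf'⟩ π r
    have : hist (r ∘ π) = hist r := by
      simp only [hist, ← Multiset.map_map]
      congr 1
      have := congrArg Finset.val (Finset.map_univ_equiv π)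
      simp only [Finset.map_val, Multiset.map_map] at this
      rw [show ⇑(Equiv.toEmbedding π) = ⇑π from rfl] at this; rw [this]
    rw [hf', hf', this]
end

section
/- Let V be a type with decidable equality, n : ℕ, S : Finset (Fin n), and f : (Fin n → V) → ℝ≥0 a factor. Then f is commutative with respect to S, i.e., f (r ∘ π) = f r for every assignment r and every permutation π : Equiv.Perm (Fin n) with π i = i for all i ∉ S, if and only if there exists a function f' : Multiset V → ({i : Fin n // i ∉ S} → V) → ℝ≥0 such that f r = f' (Multiset.map r S.val) (fun i => r i.val) for every assignment r; that is, f depends on the positions in S only through the histogram of their values. -/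
open scoped NNReal

/-- A permutation fixing everything outside `S` maps `S.val` to itself. -/
lemma map_perm_val_eq {n : ℕ} (S : Finset (Fin n)) (π : Equiv.Perm (Fin n))
    (hπ : ∀ i ∉ S, π i = i) : Multiset.map π S.val = S.val := by
  have hmem : ∀ i ∈ S, π i ∈ S := by
    intro i hi
    by_contra h
    have h1 := hπ (π i) h
    have h2 : π i = i := π.injective h1
    rw [h2] at h
    exact h hi
  have hnd : (Multiset.map π S.val).Nodup := S.nodup.map π.injective
  rw [Multiset.Nodup.ext hnd S.nodup]
  intro a
  simp only [Multiset.mem_map]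
  constructor
  · rintro ⟨b, hb, rfl⟩; exact hmem b hb
  · intro ha
    refine ⟨π.symm a, ?_, by simp⟩
    by_contra h
    have h1 := hπ _ h
    have h2 : π.symm a = a := by simpa using h1.symm
    rw [h2] at h
    exact h ha

/-- Two assignments agreeing outside `S` and with the same histogram on `S` are related by a
permutation fixing everything outside `S`. -/
lemma exists_perm_of_hist {V : Type*} [DecidableEq V] {n : ℕ}
    (S : Finset (Fin n)) :
    ∀ r₁ r₂ : Fin n → V, (∀ i ∉ S, r₁ i = r₂ i) →
      Multiset.map r₁ S.val = Multiset.map r₂ S.val →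
      ∃ π : Equiv.Perm (Fin n), (∀ i ∉ S, π i = i) ∧ ∀ i, r₁ i = r₂ (π i) := by
  induction S using Finset.strongInduction with
  | _ S ih =>
    rcases S.eq_empty_or_nonempty with rfl | ⟨i, hi⟩
    · intro r₁ r₂ hout _
      exact ⟨1, fun _ _ => rfl, fun i => hout i (by simp)⟩
    · intro r₁ r₂ hout hhist
      -- find j ∈ S with r₂ j = r₁ i
      have hmem : r₁ i ∈ Multiset.map r₂ S.val := by
        rw [← hhist]; exact Multiset.mem_map_of_mem _ hi
      obtain ⟨j, hj, hji⟩ := Multiset.mem_map.mp hmem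
      have hjS : j ∈ S := hj
      set σ : Equiv.Perm (Fin n) := Equiv.swap i j with hσ
      set r₂' : Fin n → V := r₂ ∘ σ with hr₂'
      have hσS : ∀ k ∉ S, σ k = k := by
        intro k hk
        exact Equiv.swap_apply_of_ne_of_ne (fun h => hk (h ▸ hi)) (fun h => hk (h ▸ hjS))
      have hσval : Multiset.map σ S.val = S.val := map_perm_val_eq S σ hσS
      have hr₂'i : r₂' i = r₁ i := by
        simp [hr₂', hσ, Equiv.swap_apply_left, hji]
      -- histograms of r₂' and r₂ on S agree
      have hhist' : Multiset.map r₂' S.val = Multiset.map r₂ S.val := by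
        conv_rhs => rw [← hσval]
        rw [Multiset.map_map]
      -- apply IH to S.erase i
      have hsub : S.erase i ⊂ S := Finset.erase_ssubset hi
      have hvalS : S.val = i ::ₘ (S.erase i).val := by
        rw [Finset.erase_val, ← Multiset.cons_erase (Finset.mem_def.mp hi)]
        simp
      have hout' : ∀ k ∉ S.erase i, r₁ k = r₂' k := by
        intro k hk
        by_cases hkS : k ∈ S
        · have : k = i := by
            rcases Finset.mem_erase.not.mp hk with h
            push_neg at h
            by_contra hne
            exact hne (by tauto)
          subst this
          exact hr₂'i.symm
        · rw [hout k hkS, hr₂', Function.comp_apply, hσS k hkS]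
      have hhist'' : Multiset.map r₁ (S.erase i).val = Multiset.map r₂' (S.erase i).val := by
        have h1 : Multiset.map r₁ S.val = Multiset.map r₂' S.val := by
          rw [hhist', hhist]
        rw [hvalS] at h1
        simp only [Multiset.map_cons] at h1
        rw [hr₂'i] at h1
        exact (Multiset.cons_inj_right _).mp h1
      obtain ⟨π', hπ'fix, hπ'⟩ := ih (S.erase i) hsub r₁ r₂' hout' hhist''
      refine ⟨σ * π', ?_, ?_⟩
      · intro k hk
        have hk' : k ∉ S.erase i := fun h => hk (Finset.mem_of_mem_erase h)
        simp [Equiv.Perm.mul_apply, hπ'fix k hk', hσS k hk]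
      · intro k
        rw [hπ' k]
        rfl

/-- A factor `f` is commutative with respect to `S` (partially commutative, Definition 3) if
and only if it depends on the positions in `S` only through the histogram of their values, the
remaining arguments being transferred unchanged. -/
theorem stmt_6 {V : Type*} [DecidableEq V] (n : ℕ) (S : Finset (Fin n))
    (f : (Fin n → V) → ℝ≥0) :
    (∀ (r : Fin n → V) (π : Equiv.Perm (Fin n)),
        (∀ i ∉ S, π i = i) → f (r ∘ π) = f r) ↔
      ∃ f' : Multiset V → ({i : Fin n // i ∉ S} → V) → ℝ≥0,
        ∀ r : Fin n → V, f r = f' (Multiset.map r S.val) (fun i => r i.val) := by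
  constructor
  · intro hcomm
    classical
    refine ⟨fun m g =>
      if h : ∃ r : Fin n → V, Multiset.map r S.val = m ∧ ∀ i : {i : Fin n // i ∉ S}, r i.val = g i
      then f h.choose else 0, ?_⟩
    intro r
    have hex : ∃ r' : Fin n → V, Multiset.map r' S.val = Multiset.map r S.val ∧
        ∀ i : {i : Fin n // i ∉ S}, r' i.val = r i.val :=
      ⟨r, rfl, fun _ => rfl⟩
    simp only [dif_pos hex]
    obtain ⟨hh, hg⟩ := hex.choose_spec
    set r₀ := hex.choose
    have hout : ∀ i ∉ S, r i = r₀ i := fun i hi => (hg ⟨i, hi⟩).symm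
    obtain ⟨π, hπfix, hπ⟩ := exists_perm_of_hist S r r₀ hout hh.symm
    have : f (r₀ ∘ π) = f r₀ := hcomm r₀ π hπfix
    rw [← this]
    congr 1
    funext k
    exact hπ k
  · rintro ⟨f', hf'⟩ r π hπ
    rw [hf', hf']
    have h1 : Multiset.map (r ∘ π) S.val = Multiset.map r S.val := by
      conv_rhs => rw [← map_perm_val_eq S π hπ]
      rw [Multiset.map_map]
    have h2 : (fun i : {i : Fin n // i ∉ S} => (r ∘ π) i.val) =
        fun i : {i : Fin n // i ∉ S} => r i.val := by
      funext i
      simp [hπ i.val i.2]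
    rw [h1, h2]
end

section
/- There exist n : ℕ and factors f g : (Fin n → Bool) → ℝ≥0 such that for every multiset h : Multiset Bool the images as sets coincide, i.e., Finset.image f (Finset.univ.filter (fun r => hist r = h)) = Finset.image g (Finset.univ.filter (fun r => hist r = h)), yet the multisets of potentials differ for some histogram, and consequently there is no permutation π : Equiv.Perm (Fin n) with f r = g (r ∘ π) for all assignments r. -/
open scoped NNReal

private def Fb : (Fin 3 → Bool) → Bool := fun r => decide (r = ![false, true, true])

private def Gb : (Fin 3 → Bool) → Bool :=
  fun r => decide (r = ![true, false, true]) || decide (r = ![true, true, false])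

private def phi : Bool → ℝ≥0 := fun b => if b then 2 else 1

private lemma phi_inj : Function.Injective phi := by
  intro a b hab
  cases a <;> cases b <;> simp [phi] at hab ⊢

private lemma key : ∀ r : Fin 3 → Bool,
    (Finset.univ.filter (fun s : Fin 3 → Bool => hist s = hist r)).image Fb =
    (Finset.univ.filter (fun s : Fin 3 → Bool => hist s = hist r)).image Gb := by
  decide

/-- There exist two Boolean factors whose *sets* of potentials coincide for every histogram,
while the *multisets* of potentials differ for some histogram; consequently no permutation of
argument positions makes the two factors equal. This shows multisets, not sets, of potentials
must be compared for each histogram. -/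
theorem stmt_8 :
    ∃ (n : ℕ) (f g : (Fin n → Bool) → ℝ≥0),
      (∀ h : Multiset Bool,
        Finset.image f (Finset.univ.filter (fun r : Fin n → Bool => hist r = h)) =
        Finset.image g (Finset.univ.filter (fun r : Fin n → Bool => hist r = h))) ∧
      (∃ h : Multiset Bool,
        Multiset.map f
          ((Finset.univ.filter (fun r : Fin n → Bool => hist r = h)).val) ≠
        Multiset.map g
          ((Finset.univ.filter (fun r : Fin n → Bool => hist r = h)).val)) ∧
      ¬ ∃ π : Equiv.Perm (Fin n), ∀ r : Fin n → Bool, f r = g (r ∘ π) := by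
  refine ⟨3, phi ∘ Fb, phi ∘ Gb, ?_, ?_, ?_⟩
  · intro h
    by_cases H : ∃ r : Fin 3 → Bool, hist r = h
    · obtain ⟨r, rfl⟩ := H
      rw [← Finset.image_image, ← Finset.image_image, key r]
    · have hemp : Finset.univ.filter (fun r : Fin 3 → Bool => hist r = h) = ∅ := by
        rw [Finset.filter_eq_empty_iff]
        intro r _ hr
        exact H ⟨r, hr⟩
      rw [hemp]
      simp
  · refine ⟨hist ![false, true, true], fun heq => ?_⟩
    have h2 : Multiset.map Fb
          ((Finset.univ.filter (fun r : Fin 3 → Bool => hist r = hist ![false, true, true])).val) =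
        Multiset.map Gb
          ((Finset.univ.filter (fun r : Fin 3 → Bool => hist r = hist ![false, true, true])).val) :=
      Multiset.map_injective phi_inj (by simpa [Multiset.map_map] using heq)
    exact absurd h2 (by decide)
  · rintro ⟨π, hπ⟩
    have hFG : ∀ r : Fin 3 → Bool, Fb r = Gb (r ∘ π) := fun r => phi_inj (hπ r)
    have h1 : (Finset.univ.filter (fun r : Fin 3 → Bool => Fb r = true)).card = 1 := by decide
    have h2 : (Finset.univ.filter (fun r : Fin 3 → Bool => Gb r = true)).card = 2 := by decide
    have h3 : (Finset.univ.filter (fun r : Fin 3 → Bool => Fb r = true)) =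
        (Finset.univ.filter (fun r : Fin 3 → Bool => Gb (r ∘ π) = true)) := by
      apply Finset.filter_congr
      intro x _
      rw [hFG x]
    have h4 : (Finset.univ.filter (fun r : Fin 3 → Bool => Gb (r ∘ π) = true)).card =
        (Finset.univ.filter (fun r : Fin 3 → Bool => Gb r = true)).card := by
      apply Finset.card_bij' (fun r _ => r ∘ π) (fun s _ => s ∘ π.symm)
      · intro a ha
        simp only [Finset.mem_filter, Finset.mem_univ, true_and] at ha ⊢
        exact ha
      · intro a ha
        simp only [Finset.mem_filter, Finset.mem_univ, true_and] at ha ⊢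
        have : (a ∘ π.symm) ∘ π = a := by
          funext i; simp [Function.comp]
        rw [this]
        exact ha
      · intro a _
        funext i; simp [Function.comp]
      · intro a _
        funext i; simp [Function.comp]
    rw [h3, h4, h2] at h1
    exact absurd h1 (by norm_num)
end

section
/- Let V be a finite type with Fintype.card V = m and m ≥ 1, and let n : ℕ. Then the number of histograms of assignments of n arguments over V, i.e., Fintype.card (Sym V n), is at most (n + 1) ^ (m - 1); in contrast, the number of assignments Fintype.card (Fin n → V) equals m ^ n. Hence for fixed range size m the table of a factor indexed by histograms has size polynomial in n while the table indexed by assignments has size exponential in n. -/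
lemma choose_add_le_pow : ∀ k n : ℕ, (n + k).choose k ≤ (n + 1) ^ k := by
  intro k
  induction k with
  | zero => simp
  | succ k ih =>
    intro n
    have hs := Nat.sum_Icc_choose (n + k) k
    calc (n + (k + 1)).choose (k + 1) = (n + k + 1).choose (k + 1) := by ring_nf
      _ = ∑ i ∈ Finset.Icc k (n + k), i.choose k := hs.symm
      _ ≤ ∑ _i ∈ Finset.Icc k (n + k), (n + 1) ^ k := by
          refine Finset.sum_le_sum fun i hi => ?_
          simp only [Finset.mem_Icc] at hi
          calc i.choose k = ((i - k) + k).choose k := by rw [Nat.sub_add_cancel hi.1]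
            _ ≤ (i - k + 1) ^ k := ih _
            _ ≤ (n + 1) ^ k := Nat.pow_le_pow_left (by omega) k
      _ = (n + 1) ^ (k + 1) := by
          rw [Finset.sum_const, Nat.card_Icc, smul_eq_mul, pow_succ, mul_comm]
          congr 1
          omega

/-- The number of histograms (multisets of size `n` over a range of size `m`, i.e., elements of
`Sym V n`) is at most `(n + 1) ^ (m - 1)`, polynomial in `n` for fixed `m`, whereas the number
of assignments `Fin n → V` is `m ^ n`, exponential in `n`. -/
theorem stmt_10 {V : Type*} [Fintype V] [DecidableEq V] (m n : ℕ)
    (hm : Fintype.card V = m) (hm1 : 1 ≤ m) :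
    Fintype.card (Sym V n) ≤ (n + 1) ^ (m - 1) ∧
    Fintype.card (Fin n → V) = m ^ n := by
  constructor
  · rw [Sym.card_sym_eq_choose, hm]
    have h1 : m + n - 1 = n + (m - 1) := by omega
    have h2 : (m + n - 1).choose n = (m + n - 1).choose (m - 1) := by
      have := Nat.choose_symm (show m - 1 ≤ m + n - 1 by omega)
      rwa [show m + n - 1 - (m - 1) = n by omega] at this
    rw [h2, h1]
    exact choose_add_le_pow _ _
  · simp [hm]
end
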